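/- Assume a well-defined ADT in which every sort contains at least two constructor terms, and let C = σ¹ → f¹ → σ² → ⋯ → fⁿ → σ¹ be a cycle in the dependency graph D from a sort σ¹ to itself. If some constructor fⁱ on C has more than one argument, then there exist two incomparable constructor terms t₁[•], t₂[•] of sort σ¹ with holes of sort σ¹, and hence σ¹ is expanding. -/

import Mathlib

structure ADTSig where
  numSorts : ℕ
  numCtors : ℕ
  ctorArgs : Fin numCtors → List (Fin numSorts)
  ctorRes : Fin numCtors → Fin numSorts

namespace ADTSig

inductive Term (S : ADTSig) : Fin S.numSorts → Type where
  | mk (f : Fin S.numCtors)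
      (args : (i : Fin (S.ctorArgs f).length) → Term S ((S.ctorArgs f).get i)) :
      Term S (S.ctorRes f)

def Term.size {S : ADTSig} : {σ : Fin S.numSorts} → Term S σ → ℕ
  | _, .mk _ args => 1 + ∑ i, (args i).size

def Term.head {S : ADTSig} : {σ : Fin S.numSorts} → Term S σ → Fin S.numCtors
  | _, .mk f _ => f

def WellDefined (S : ADTSig) : Prop := ∀ σ, Nonempty (S.Term σ)

def ExpandingSort (S : ADTSig) (σ : Fin S.numSorts) : Prop :=
  ∀ n : ℕ, ∃ b : ℕ, ∀ b' ≥ b,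
    (∀ t : S.Term σ, t.size ≠ b') ∨ n ≤ Nat.card {t : S.Term σ // t.size = b'}

def ExpandingADT (S : ADTSig) : Prop := ∀ σ, ExpandingSort S σ

/-- The size image `𝕊_σ`. -/
def SizeImage (S : ADTSig) (σ : Fin S.numSorts) : Set ℕ :=
  {b | ∃ t : S.Term σ, t.size = b}

/-- The relativised size image `𝕊^f_σ`: sizes of terms not starting with `f`. -/
def RelSizeImage (S : ADTSig) (σ : Fin S.numSorts) (f : Fin S.numCtors) : Set ℕ :=
  {b | ∃ t : S.Term σ, t.head ≠ f ∧ t.size = b}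

/-- Vertices of the bipartite dependency graph: sorts and constructors. -/
abbrev DepVertex (S : ADTSig) := Sum (Fin S.numSorts) (Fin S.numCtors)

/-- Edges of the dependency graph `D`: `(σ₀, f)` for every constructor `f`
with result sort `σ₀`, and `(f, σ_j)` for every argument sort `σ_j` of `f`. -/
def DepEdge (S : ADTSig) : DepVertex S → DepVertex S → Prop
  | .inl σ, .inr f => S.ctorRes f = σ
  | .inr f, .inl σ => σ ∈ S.ctorArgs f
  | .inl _, .inl _ => False
  | .inr _, .inr _ => False

/-- `l` is a (nonempty) path in `D` from `σ` to itself: a closed walk. -/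
def IsClosedWalk (S : ADTSig) (σ : Fin S.numSorts) (l : List (DepVertex S)) : Prop :=
  l ≠ [] ∧ List.Chain (DepEdge S) (Sum.inl σ) l ∧ l.getLast? = some (Sum.inl σ)

/-- The vertex list (after the starting vertex `σ¹ = ss 0`) of the cycle
`σ¹ → f¹ → σ² → f² → ⋯ → fⁿ → σ¹` given by `ss`, `fs`. -/
def cycleList (S : ADTSig) (n : ℕ) (ss : Fin (n + 1) → Fin S.numSorts)
    (fs : Fin (n + 1) → Fin S.numCtors) : List (DepVertex S) :=
  ((List.finRange (n + 1)).map (fun i => [Sum.inr (fs i), Sum.inl (ss (i + 1))])).flatten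

/-- Constructor terms with exactly one hole `•` of sort `τ`; `Ctx S τ σ` is a
term of sort `σ` with a hole of sort `τ`. -/
inductive Ctx (S : ADTSig) (τ : Fin S.numSorts) : Fin S.numSorts → Type where
  | hole : Ctx S τ τ
  | node (f : Fin S.numCtors) (i : Fin (S.ctorArgs f).length)
      (c : Ctx S τ ((S.ctorArgs f).get i))
      (side : (j : Fin (S.ctorArgs f).length) → j ≠ i →
         S.Term ((S.ctorArgs f).get j)) :
      Ctx S τ (S.ctorRes f)

/-- `c.fill t` = `c[t]`, filling the hole of `c` with the term `t`. -/
def Ctx.fill {S : ADTSig} {τ : Fin S.numSorts} :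
    {σ : Fin S.numSorts} → Ctx S τ σ → S.Term τ → S.Term σ
  | _, .hole, t => t
  | _, .node f i c side, t =>
      Term.mk f (fun j =>
        if h : j = i then cast (by rw [h]) (c.fill t) else side j h)

/-- The size `|t[•]|` of a term with hole: the number of constructor
occurrences (the hole does not count). -/
def Ctx.csize {S : ADTSig} {τ : Fin S.numSorts} :
    {σ : Fin S.numSorts} → Ctx S τ σ → ℕ
  | _, .hole => 0
  | _, .node f i c side =>
      1 + c.csize + ∑ j, if h : j = i then 0 else (side j h).size

/-- Composition of terms with holes: `t₁[•] ∘ t₂[•] = t₁[t₂[•]]`. -/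
def Ctx.comp {S : ADTSig} {τ ρ : Fin S.numSorts} :
    {σ : Fin S.numSorts} → Ctx S τ σ → Ctx S ρ τ → Ctx S ρ σ
  | _, .hole, d => d
  | _, .node f i c side, d => .node f i (c.comp d) side

/-- `c^i`: the `i`-fold composition of a term with hole with itself. -/
def Ctx.pow {S : ADTSig} {σ : Fin S.numSorts} (c : Ctx S σ σ) : ℕ → Ctx S σ σ
  | 0 => .hole
  | i + 1 => c.comp (c.pow i)

/-- Two terms with holes are incomparable if all their fillings differ. -/
def Incomparable {S : ADTSig} {τ₁ τ₂ σ : Fin S.numSorts}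
    (c₁ : Ctx S τ₁ σ) (c₂ : Ctx S τ₂ σ) : Prop :=
  ∀ (s₁ : S.Term τ₁) (s₂ : S.Term τ₂), c₁.fill s₁ ≠ c₂.fill s₂

end ADTSig

namespace ADTSig

variable {S : ADTSig}

lemma ADT_fill_size {τ : Fin S.numSorts} :
    ∀ {σ : Fin S.numSorts} (c : Ctx S τ σ) (t : S.Term τ),
      (c.fill t).size = c.csize + t.size := by
  intro σ c
  induction c with
  | hole => intro t; simp [Ctx.fill, Ctx.csize]
  | node f i c side ih =>
    intro t
    have key : ∀ j : Fin (S.ctorArgs f).length,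
        (if h : j = i then cast (by rw [h]) (c.fill t) else side j h).size
        = (if j = i then (c.fill t).size else 0)
          + (if h : j = i then 0 else (side j h).size) := by
      intro j
      by_cases h : j = i
      · subst h; simp
      · simp [h]
    simp only [Ctx.fill, Ctx.csize, Term.size, key]
    rw [Finset.sum_add_distrib, Finset.sum_ite_eq' Finset.univ i]
    simp [ih]
    omega

lemma ADT_fill_injective {τ : Fin S.numSorts} :
    ∀ {σ : Fin S.numSorts} (c : Ctx S τ σ) (a b : S.Term τ),
      c.fill a = c.fill b → a = b := by
  intro σ c
  induction c with
  | hole => intro a b h; exact h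
  | node f i c side ih =>
    intro a b h
    simp only [Ctx.fill] at h
    injection h with h1 h2
    have h3 := congrFun h2 i
    simp only [dif_pos rfl] at h3
    exact ih a b (by simpa using h3)

lemma ADT_comp_fill {τ ρ : Fin S.numSorts} :
    ∀ {σ : Fin S.numSorts} (c : Ctx S τ σ) (d : Ctx S ρ τ) (t : S.Term ρ),
      (c.comp d).fill t = c.fill (d.fill t) := by
  intro σ c
  induction c with
  | hole => intro d t; rfl
  | node f i c side ih =>
    intro d t
    simp only [Ctx.comp, Ctx.fill, ih]

lemma ADT_comp_csize {τ ρ : Fin S.numSorts} :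
    ∀ {σ : Fin S.numSorts} (c : Ctx S τ σ) (d : Ctx S ρ τ),
      (c.comp d).csize = c.csize + d.csize := by
  intro σ c
  induction c with
  | hole => intro d; simp [Ctx.comp, Ctx.csize]
  | node f i c side ih =>
    intro d
    simp only [Ctx.comp, Ctx.csize, ih]
    omega

lemma ADT_fill_cast {τ σ σ' : Fin S.numSorts} (e : σ = σ') (c : Ctx S τ σ) (t : S.Term τ) :
    (cast (show Ctx S τ σ = Ctx S τ σ' by rw [e]) c).fill t
      = cast (show S.Term σ = S.Term σ' by rw [e]) (c.fill t) := by
  subst e; rfl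

lemma ADT_csize_cast {τ σ σ' : Fin S.numSorts} (e : σ = σ') (c : Ctx S τ σ) :
    (cast (show Ctx S τ σ = Ctx S τ σ' by rw [e]) c).csize = c.csize := by
  subst e; rfl

lemma ADT_incomp_csize_pos (hS : S.WellDefined) {τ1 τ2 σ : Fin S.numSorts}
    (c1 : Ctx S τ1 σ) (c2 : Ctx S τ2 σ) (h : Incomparable c1 c2) : 0 < c1.csize := by
  cases c1 with
  | hole => exact absurd rfl (h (c2.fill (hS τ2).some) (hS τ2).some)
  | node f i c side => simp only [Ctx.csize]; omega

def ADT_dest {S : ADTSig} : {σ : Fin S.numSorts} → (t : S.Term σ) →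
    (f : Fin S.numCtors) × ((i : Fin (S.ctorArgs f).length) → S.Term ((S.ctorArgs f).get i))
  | _, .mk f args => ⟨f, args⟩

lemma ADT_dest_injective_heq : ∀ {σ1 σ2 : Fin S.numSorts} (t1 : S.Term σ1) (t2 : S.Term σ2),
    ADT_dest t1 = ADT_dest t2 → HEq t1 t2 := by
  intro σ1 σ2 t1 t2 h
  cases t1 with
  | mk f a =>
    cases t2 with
    | mk g b =>
      simp only [ADT_dest] at h
      obtain ⟨h1, h2⟩ := Sigma.mk.inj_iff.mp h
      subst h1
      rw [eq_of_heq h2]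

lemma ADT_dest_injective {σ : Fin S.numSorts} (t1 t2 : S.Term σ)
    (h : ADT_dest t1 = ADT_dest t2) : t1 = t2 :=
  eq_of_heq (ADT_dest_injective_heq t1 t2 h)

lemma ADT_size_dest {σ : Fin S.numSorts} (t : S.Term σ) :
    t.size = 1 + ∑ i, ((ADT_dest t).2 i).size := by
  cases t; rfl

lemma ADT_finite_le : ∀ (s : ℕ) (σ : Fin S.numSorts), Finite {t : S.Term σ // t.size ≤ s} := by
  intro s
  induction s with
  | zero =>
    intro σ
    have : IsEmpty {t : S.Term σ // t.size ≤ 0} := by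
      constructor
      rintro ⟨t, ht⟩
      cases t with
      | mk f args => simp [Term.size] at ht
    infer_instance
  | succ s ih =>
    intro σ
    haveI inst : ∀ (f : Fin S.numCtors) (i : Fin (S.ctorArgs f).length),
        Finite {u : S.Term ((S.ctorArgs f).get i) // u.size ≤ s} := fun f i => ih _
    let targ : Type := (f : Fin S.numCtors) ×
      ((i : Fin (S.ctorArgs f).length) → {u : S.Term ((S.ctorArgs f).get i) // u.size ≤ s})
    haveI : Finite targ := by infer_instance
    let G : {t : S.Term σ // t.size ≤ s + 1} → targ := fun x =>
      ⟨(ADT_dest x.1).1, fun i => ⟨(ADT_dest x.1).2 i, by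
        have hb : ((ADT_dest x.1).2 i).size ≤ ∑ j, ((ADT_dest x.1).2 j).size :=
          Finset.single_le_sum (f := fun j => ((ADT_dest x.1).2 j).size)
            (fun j _ => Nat.zero_le _) (Finset.mem_univ i)
        have hs := ADT_size_dest x.1
        have := x.2
        omega⟩⟩
    let proj : targ → (f : Fin S.numCtors) ×
        ((i : Fin (S.ctorArgs f).length) → S.Term ((S.ctorArgs f).get i)) :=
      fun d => ⟨d.1, fun i => (d.2 i).1⟩
    have key : ∀ x, proj (G x) = ADT_dest x.1 := fun _ => rfl
    apply Finite.of_injective G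
    intro x y h
    apply Subtype.ext
    apply ADT_dest_injective
    rw [← key x, ← key y, h]

def ADT_word {S : ADTSig} {σ : Fin S.numSorts} (e1 e2 : Ctx S σ σ) : List Bool → Ctx S σ σ
  | [] => .hole
  | true :: l => e1.comp (ADT_word e1 e2 l)
  | false :: l => e2.comp (ADT_word e1 e2 l)

lemma ADT_word_csize {σ : Fin S.numSorts} (e1 e2 : Ctx S σ σ) {K : ℕ}
    (he1 : e1.csize = K) (he2 : e2.csize = K) :
    ∀ l : List Bool, (ADT_word e1 e2 l).csize = K * l.length := by
  intro l
  induction l with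
  | nil => simp [ADT_word, Ctx.csize]
  | cons b l ih =>
    cases b <;> simp only [ADT_word, ADT_comp_csize, ih, he1, he2, List.length_cons] <;> ring

lemma ADT_word_inj {σ : Fin S.numSorts} (e1 e2 : Ctx S σ σ)
    (hinc : Incomparable e1 e2) (t : S.Term σ) :
    ∀ l1 l2 : List Bool, l1.length = l2.length →
      (ADT_word e1 e2 l1).fill t = (ADT_word e1 e2 l2).fill t → l1 = l2 := by
  intro l1
  induction l1 with
  | nil =>
    intro l2 hl _
    exact (List.length_eq_zero_iff.mp hl.symm).symm
  | cons b1 l1 ih =>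
    intro l2 hl h
    cases l2 with
    | nil => simp at hl
    | cons b2 l2 =>
      have hl' : l1.length = l2.length := by simpa using hl
      cases b1 <;> cases b2 <;>
        simp only [ADT_word, ADT_comp_fill] at h
      · rw [ih l2 hl' (ADT_fill_injective e2 _ _ h)]
      · exact absurd h.symm (hinc _ _)
      · exact absurd h (hinc _ _)
      · rw [ih l2 hl' (ADT_fill_injective e1 _ _ h)]

lemma ADT_expanding_of_incomparable (hS : S.WellDefined) {σ : Fin S.numSorts}
    (c1 c2 : Ctx S σ σ) (hincomp : Incomparable c1 c2) : ExpandingSort S σ := by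
  classical
  have hincomp' : Incomparable c2 c1 := fun s2 s1 h => hincomp s1 s2 h.symm
  have hinc12 : Incomparable (c1.comp c2) (c2.comp c1) := by
    intro s1 s2 h
    rw [ADT_comp_fill, ADT_comp_fill] at h
    exact hincomp _ _ h
  have he1 : (c1.comp c2).csize = c1.csize + c2.csize := ADT_comp_csize _ _
  have he2 : (c2.comp c1).csize = c1.csize + c2.csize := by
    rw [ADT_comp_csize]; omega
  have hc1pos : 0 < c1.csize := ADT_incomp_csize_pos hS c1 c2 hincomp
  set K : ℕ := c1.csize + c2.csize with hKdef
  have hKpos : 0 < K := by omega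
  intro N
  set P : ℕ → Prop := fun r => ∃ a, a % K = r ∧ ∃ t : S.Term σ, t.size = a with hP
  set A : ℕ → ℕ := fun r => if h : P r then h.choose else 0 with hA
  refine ⟨Finset.sup (Finset.range K) A + K * N, ?_⟩
  intro b' hb'
  by_cases hT : ∃ t : S.Term σ, t.size = b'
  · right
    obtain ⟨t, ht⟩ := hT
    have hPr : P (b' % K) := ⟨b', rfl, t, ht⟩
    obtain ⟨har, ta, hta⟩ := hPr.choose_spec
    have haB : hPr.choose ≤ Finset.sup (Finset.range K) A := by
      have h1 : A (b' % K) ≤ Finset.sup (Finset.range K) A :=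
        Finset.le_sup (Finset.mem_range.mpr (Nat.mod_lt _ hKpos))
      rw [hA] at h1
      simpa [dif_pos hPr] using h1
    have hab' : hPr.choose ≤ b' := le_trans haB (by omega)
    have hdvd : K ∣ b' - hPr.choose := (Nat.modEq_iff_dvd' hab').mp har
    have hKq : K * ((b' - hPr.choose) / K) = b' - hPr.choose := Nat.mul_div_cancel' hdvd
    set q := (b' - hPr.choose) / K with hq
    have hqN : N ≤ q := by
      have h2 : K * N ≤ b' - hPr.choose := by omega
      have h3 : K * N ≤ K * q := by omega
      exact Nat.le_of_mul_le_mul_left h3 hKpos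
    haveI := ADT_finite_le (S := S) b' σ
    haveI : Finite {t : S.Term σ // t.size = b'} := by
      apply Finite.of_injective
        (fun x : {t : S.Term σ // t.size = b'} =>
          (⟨x.1, le_of_eq x.2⟩ : {t : S.Term σ // t.size ≤ b'}))
      intro x y hxy
      simp only [Subtype.mk.injEq] at hxy
      exact Subtype.ext hxy
    let F : (Fin q → Bool) → {t : S.Term σ // t.size = b'} := fun g =>
      ⟨(ADT_word (c1.comp c2) (c2.comp c1) (List.ofFn g)).fill ta, by
        rw [ADT_fill_size, ADT_word_csize _ _ he1 he2, List.length_ofFn, hta]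
        omega⟩
    have hFinj : Function.Injective F := by
      intro g1 g2 hg
      have hval := congrArg Subtype.val hg
      have hl := ADT_word_inj _ _ hinc12 ta (List.ofFn g1) (List.ofFn g2)
        (by simp) hval
      exact List.ofFn_injective hl
    calc N ≤ 2 ^ N := le_of_lt (Nat.lt_two_pow_self)
      _ ≤ 2 ^ q := Nat.pow_le_pow_right (by norm_num) hqN
      _ = Nat.card (Fin q → Bool) := by simp [Nat.card_eq_fintype_card]
      _ ≤ Nat.card {t : S.Term σ // t.size = b'} := Nat.card_le_card_of_injective F hFinj
  · left
    intro t ht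
    exact hT ⟨t, ht⟩

end ADTSig

open Fin.NatCast in
open ADTSig in
/-- Assume a well-defined ADT in which every sort contains at least two
constructor terms, and let `C = σ¹ → f¹ → σ² → ⋯ → fⁿ → σ¹` be a cycle in the
dependency graph `D` (here of length `n + 1`, with `σ¹ = ss 0`). If some
constructor on `C` has more than one argument, then there exist two
incomparable constructor terms `t₁[•], t₂[•]` of sort `σ¹` with holes of sort
`σ¹`, and hence `σ¹` is expanding. -/
theorem nonunary_cycle_incomparable_expanding (S : ADTSig) (hS : S.WellDefined)
    (h2 : ∀ σ, ∃ t₁ t₂ : S.Term σ, t₁ ≠ t₂)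
    (n : ℕ) (ss : Fin (n + 1) → Fin S.numSorts)
    (fs : Fin (n + 1) → Fin S.numCtors)
    (hcyc : ∀ i, S.ctorRes (fs i) = ss i ∧ ss (i + 1) ∈ S.ctorArgs (fs i))
    (hbig : ∃ i, 1 < (S.ctorArgs (fs i)).length) :
    (∃ t₁ t₂ : Ctx S (ss 0) (ss 0), Incomparable t₁ t₂) ∧
    ExpandingSort S (ss 0) := by
  classical
  obtain ⟨i0, hbig⟩ := hbig
  have u : ∀ σ, S.Term σ := fun σ => (hS σ).some
  choose v w hvw using h2
  -- chains along the cycle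
  have chainEx : ∀ (m : ℕ) (i : Fin (n+1)),
      Nonempty (Ctx S (ss (i + (m : Fin (n+1)))) (ss i)) := by
    intro m
    induction m with
    | zero =>
      intro i
      have e : i + ((0:ℕ) : Fin (n+1)) = i := by simp
      exact ⟨cast (by rw [e]) (Ctx.hole : Ctx S (ss i) (ss i))⟩
    | succ m ihm =>
      intro i
      obtain ⟨c⟩ := ihm i
      obtain ⟨hres2, hmem2⟩ := hcyc (i + (m : Fin (n+1)))
      obtain ⟨k2, hk2⟩ := List.mem_iff_get.mp hmem2
      let step : Ctx S (ss ((i + (m : Fin (n+1))) + 1))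
          (S.ctorRes (fs (i + (m : Fin (n+1))))) :=
        .node _ k2 (cast (by rw [hk2]) (Ctx.hole : Ctx S (ss ((i + (m : Fin (n+1))) + 1)) _))
          (fun j' _ => u _)
      have e2 : i + ((m+1 : ℕ) : Fin (n+1)) = (i + (m : Fin (n+1))) + 1 := by
        push_cast
        rw [add_assoc]
      refine ⟨cast (by rw [e2]) (c.comp (cast (by rw [hres2]) step))⟩
  -- pre and post chains
  have epre : (0 : Fin (n+1)) + ((i0.val : ℕ) : Fin (n+1)) = i0 := by
    rw [zero_add, Fin.cast_val_eq_self]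
  obtain ⟨pre0⟩ := chainEx i0.val 0
  have pre : Ctx S (ss i0) (ss 0) := cast (by rw [epre]) pre0
  have epost : (i0 + 1) + ((n - i0.val : ℕ) : Fin (n+1)) = 0 := by
    have h1 : i0.val + 1 + (n - i0.val) = n + 1 := by
      have := i0.isLt; omega
    calc i0 + 1 + ((n - i0.val : ℕ) : Fin (n+1))
        = ((i0.val : ℕ) : Fin (n+1)) + 1 + ((n - i0.val : ℕ) : Fin (n+1)) := by
          rw [Fin.cast_val_eq_self]
      _ = (((i0.val + 1 + (n - i0.val)) : ℕ) : Fin (n+1)) := by push_cast; ring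
      _ = ((n + 1 : ℕ) : Fin (n+1)) := by rw [h1]
      _ = 0 := by
          simp
  obtain ⟨post0⟩ := chainEx (n - i0.val) (i0 + 1)
  have post : Ctx S (ss 0) (ss (i0 + 1)) := cast (by rw [epost]) post0
  -- mid contexts
  obtain ⟨hres, hmem⟩ := hcyc i0
  obtain ⟨k, hk⟩ := List.mem_iff_get.mp hmem
  have hj : ∃ j : Fin (S.ctorArgs (fs i0)).length, j ≠ k := by
    rcases eq_or_ne k.val 0 with h | h
    · refine ⟨⟨1, hbig⟩, fun e => ?_⟩
      have := congrArg Fin.val e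
      simp [h] at this
    · refine ⟨⟨0, by omega⟩, fun e => ?_⟩
      have := congrArg Fin.val e
      simp at this
      omega
  obtain ⟨j, hjk⟩ := hj
  let hole' : Ctx S (ss (i0 + 1)) ((S.ctorArgs (fs i0)).get k) :=
    cast (by rw [hk]) (Ctx.hole : Ctx S (ss (i0 + 1)) (ss (i0 + 1)))
  let m1 : Ctx S (ss (i0 + 1)) (S.ctorRes (fs i0)) :=
    .node (fs i0) k hole' (fun j' _ => v _)
  let m2 : Ctx S (ss (i0 + 1)) (S.ctorRes (fs i0)) :=
    .node (fs i0) k hole' (fun j' _ => w _)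
  have hmid : ∀ x y, m1.fill x = m2.fill y → False := by
    intro x y h
    simp only [m1, m2, Ctx.fill] at h
    injection h with h1 h2
    have h3 := congrFun h2 j
    rw [dif_neg hjk, dif_neg hjk] at h3
    exact hvw _ h3
  let m1' : Ctx S (ss (i0 + 1)) (ss i0) := cast (by rw [hres]) m1
  let m2' : Ctx S (ss (i0 + 1)) (ss i0) := cast (by rw [hres]) m2
  let c1 : Ctx S (ss 0) (ss 0) := (pre.comp m1').comp post
  let c2 : Ctx S (ss 0) (ss 0) := (pre.comp m2').comp post
  have hincomp : Incomparable c1 c2 := by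
    intro s1 s2 h
    simp only [c1, c2, ADT_comp_fill] at h
    have h4 := ADT_fill_injective pre _ _ h
    simp only [m1', m2', ADT_fill_cast hres] at h4
    exact hmid _ _ ((cast_inj _).mp h4)
  exact ⟨⟨c1, c2, hincomp⟩, ADT_expanding_of_incomparable hS c1 c2 hincomp⟩
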